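/- Let p > 1, ν ∈ ℝ, T̂ ∈ (0,∞], T ∈ (0,∞]. Let μ₁, μ₃ : [0,T̂) → ℝ be continuous; let α, b : [0,T̂) → ℝ be continuously differentiable with α(0)=1, b(0)=0, α' = α·μ₁, b' = α^{p−1}·μ₃, and α > 0 on [0,T̂); let ρ : [0,T̂) → [0,T) be continuously differentiable with ρ(0)=0 and ρ'(τ) = α(τ)^{2p−2}. Let u : ℝ × [0,T) → ℝ have continuous partial derivatives u_x, u_{xx}, u_t (jointly continuous, u continuously differentiable in (x,t)), and suppose u satisfies u_t(x,t) = ν·u_{xx}(x,t) − |u(x,t)|^{p−1}·sgn(u(x,t))·u_x(x,t) for all x ∈ ℝ, t ∈ (0,T). Then the function v(ξ,τ) = α(τ)·u(α(τ)^{p−1}·ξ + b(τ), ρ(τ)) satisfies the co-moving equation v_τ(ξ,τ) = ν·v_{ξξ}(ξ,τ) − |v(ξ,τ)|^{p−1}·sgn(v(ξ,τ))·v_ξ(ξ,τ) + μ₁(τ)·(v(ξ,τ) + (p−1)·ξ·v_ξ(ξ,τ)) + μ₃(τ)·v_ξ(ξ,τ) for all ξ ∈ ℝ and τ ∈ (0,T̂).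 -/

import Mathlib

/-- The half-open time interval `[0, T)`, where `T ∈ (0, ∞]` is an extended real. -/
def tIval (T : EReal) : Set ℝ := {t : ℝ | 0 ≤ t ∧ (t : EReal) < T}

/-- The solution in co-moving coordinates obtained from the original solution `u`:
`v(ξ,τ) = α(τ) u(α(τ)^(p−1) ξ + b(τ), ρ(τ))`. -/
noncomputable def comovV (p : ℝ) (α b ρ : ℝ → ℝ) (u : ℝ → ℝ → ℝ) (ξ τ : ℝ) : ℝ :=
  α τ * u (α τ ^ (p - 1) * ξ + b τ) (ρ τ)

open Filter Topology Asymptotics Set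

/-- `tIval` is a neighborhood of any interior time. -/
lemma tIval_mem_nhds {T : EReal} {t : ℝ} (h0 : 0 < t) (hT : (t : EReal) < T) :
    tIval T ∈ 𝓝 t := by
  have hopen : IsOpen ({s : ℝ | 0 < s} ∩ (fun x : ℝ => (x : EReal)) ⁻¹' Set.Iio T) :=
    isOpen_Ioi.inter (isOpen_Iio.preimage continuous_coe_real_ereal)
  exact Filter.mem_of_superset (hopen.mem_nhds ⟨h0, hT⟩)
    (fun s hs => ⟨hs.1.le, hs.2⟩)

/-- Sign is invariant under multiplication by a positive number. -/
lemma real_sign_mul_pos {a u : ℝ} (ha : 0 < a) : Real.sign (a * u) = Real.sign u := by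
  rcases lt_trichotomy u 0 with h | h | h
  · rw [Real.sign_of_neg (mul_neg_of_pos_of_neg ha h), Real.sign_of_neg h]
  · rw [h, mul_zero]
  · rw [Real.sign_of_pos (mul_pos ha h), Real.sign_of_pos h]

/-- A two-variable function with a continuous first partial derivative (on `univ ×ˢ s`,
`s` open) and a second partial derivative at the point is Fréchet differentiable there. -/
lemma hasFDerivAt_of_partial {u ux : ℝ → ℝ → ℝ} {s : Set ℝ} (hs : IsOpen s)
    (hux : ∀ x : ℝ, ∀ t ∈ s, HasDerivAt (fun x' => u x' t) (ux x t) x)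
    (huxcont : ContinuousOn (fun q : ℝ × ℝ => ux q.1 q.2) (Set.univ ×ˢ s))
    {x0 t0 b : ℝ} (ht0 : t0 ∈ s)
    (hut0 : HasDerivAt (fun t' => u x0 t') b t0) :
    HasFDerivAt (fun q : ℝ × ℝ => u q.1 q.2)
      ((ux x0 t0) • (ContinuousLinearMap.fst ℝ ℝ ℝ)
        + b • (ContinuousLinearMap.snd ℝ ℝ ℝ)) (x0, t0) := by
  set a := ux x0 t0 with ha
  rw [hasFDerivAt_iff_isLittleO_nhds_zero]
  have key : (fun h : ℝ × ℝ => u (x0 + h.1) (t0 + h.2) - u x0 t0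
      - (a * h.1 + b * h.2))
      = (fun h : ℝ × ℝ => (u (x0 + h.1) (t0 + h.2) - u x0 (t0 + h.2) - a * h.1)
        + (u x0 (t0 + h.2) - u x0 t0 - b * h.2)) := by
    funext h; ring
  simp only [ContinuousLinearMap.add_apply, ContinuousLinearMap.smul_apply,
    ContinuousLinearMap.coe_fst', ContinuousLinearMap.coe_snd', smul_eq_mul,
    Prod.fst_add, Prod.snd_add]
  rw [key]
  apply IsLittleO.add
  · -- the x-part, via MVT and continuity of ux
    rw [isLittleO_iff]
    intro ε hε
    -- continuity of ux at (x0, t0)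
    have hmem : Set.univ ×ˢ s ∈ 𝓝 ((x0, t0) : ℝ × ℝ) :=
      prod_mem_nhds Filter.univ_mem (hs.mem_nhds ht0)
    have hcont : ContinuousAt (fun q : ℝ × ℝ => ux q.1 q.2) (x0, t0) :=
      huxcont.continuousAt hmem
    have hball : {q : ℝ × ℝ | |ux q.1 q.2 - a| ≤ ε} ∈ 𝓝 ((x0, t0) : ℝ × ℝ) := by
      have := hcont (Metric.closedBall_mem_nhds (ux x0 t0) hε)
      refine Filter.mem_of_superset this ?_
      intro q hq
      simpa [Real.dist_eq] using hq
    obtain ⟨δ, hδ, hδsub⟩ := Metric.mem_nhds_iff.1 (Filter.inter_mem hball hmem)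
    have hball0 : Metric.ball (0 : ℝ × ℝ) δ ∈ 𝓝 (0 : ℝ × ℝ) := Metric.ball_mem_nhds _ hδ
    filter_upwards [hball0] with h hh
    have hth : t0 + h.2 ∈ s := by
      have : ((x0 + h.1, t0 + h.2) : ℝ × ℝ) ∈ Metric.ball ((x0, t0) : ℝ × ℝ) δ := by
        simp only [Metric.mem_ball, Prod.dist_eq, Real.dist_eq] at hh ⊢
        simpa using hh
      exact (hδsub this).2.2
    rcases eq_or_ne h.1 0 with h1 | h1
    · simp [h1]
      positivity
    · -- MVT on the interval between x0 and x0 + h.1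
      set t := t0 + h.2 with htdef
      have key2 : ∃ c : ℝ, |c - x0| ≤ |h.1| ∧
          u (x0 + h.1) t - u x0 t = ux c t * h.1 := by
        rcases h1.lt_or_gt with hlt | hlt
        · obtain ⟨c, hc, hceq⟩ := exists_hasDerivAt_eq_slope (fun x => u x t)
            (fun x => ux x t) (by linarith : x0 + h.1 < x0)
            (fun x _ => (hux x t hth).continuousAt.continuousWithinAt)
            (fun x _ => hux x t hth)
          refine ⟨c, ?_, ?_⟩
          · rw [abs_of_neg (by linarith [hc.1, hc.2] : c - x0 < 0), abs_of_neg hlt]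
            linarith [hc.1]
          · rw [eq_div_iff (by intro hcon; apply h1; linarith)] at hceq
            linear_combination hceq
        · obtain ⟨c, hc, hceq⟩ := exists_hasDerivAt_eq_slope (fun x => u x t)
            (fun x => ux x t) (by linarith : x0 < x0 + h.1)
            (fun x _ => (hux x t hth).continuousAt.continuousWithinAt)
            (fun x _ => hux x t hth)
          refine ⟨c, ?_, ?_⟩
          · rw [abs_of_pos (by linarith [hc.1, hc.2] : 0 < c - x0), abs_of_pos hlt]
            linarith [hc.2]
          · rw [eq_div_iff (by intro hcon; apply h1; linarith)] at hceq
            linear_combination -hceq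
      obtain ⟨c, hcclose, hceq⟩ := key2
      have hcball : ((c, t) : ℝ × ℝ) ∈ Metric.ball ((x0, t0) : ℝ × ℝ) δ := by
        simp only [Metric.mem_ball, Prod.dist_eq, Real.dist_eq] at hh ⊢
        simp only [Prod.fst_zero, Prod.snd_zero, sub_zero] at hh
        have : max |c - x0| |t - t0| ≤ max |h.1| |h.2| := by
          apply max_le_max hcclose
          simp [htdef]
        exact lt_of_le_of_lt this hh
      have hest : |ux c t - a| ≤ ε := (hδsub hcball).1
      calc ‖u (x0 + h.1) t - u x0 t - a * h.1‖
          = |ux c t - a| * |h.1| := by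
            rw [hceq]; rw [Real.norm_eq_abs, ← abs_mul]; ring_nf
        _ ≤ ε * |h.1| := by
            apply mul_le_mul_of_nonneg_right hest (abs_nonneg _)
        _ ≤ ε * ‖h‖ := by
            apply mul_le_mul_of_nonneg_left _ hε.le
            rw [← Real.norm_eq_abs]
            exact norm_fst_le h
  · -- the t-part, from hut0
    have h1 : (fun h : ℝ => u x0 (t0 + h) - u x0 t0 - b * h) =o[𝓝 0] (fun h : ℝ => h) := by
      have := hasDerivAt_iff_isLittleO_nhds_zero.1 hut0
      simpa [mul_comm] using this
    have h2 : (fun h : ℝ × ℝ => u x0 (t0 + h.2) - u x0 t0 - b * h.2)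
        =o[𝓝 (0 : ℝ × ℝ)] (fun h : ℝ × ℝ => h.2) := by
      exact h1.comp_tendsto (by simpa using (continuous_snd.tendsto (0 : ℝ × ℝ)))
    exact h2.trans_isBigO (isBigO_of_le _ (fun h => by
      rw [Real.norm_eq_abs, ← Real.norm_eq_abs]
      exact norm_snd_le h))

/-- (Freezing method, forward direction.) If `u` solves the
generalized Burgers' equation `u_t = ν u_xx − |u|^(p−1) sgn(u) u_x` and
`α, b, ρ` solve `α' = αμ₁`, `b' = α^(p−1)μ₃`, `ρ' = α^(2p−2)` with
`α(0)=1`, `b(0)=0`, `ρ(0)=0`, then `v(ξ,τ) = α(τ) u(α(τ)^(p−1)ξ + b(τ), ρ(τ))`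
solves the co-moving equation
`v_τ = ν v_ξξ − |v|^(p−1) sgn(v) v_ξ + μ₁(v + (p−1)ξ v_ξ) + μ₃ v_ξ`. -/
theorem stmt_17 (p ν : ℝ) (hp : 1 < p) (That T : EReal)
    (hThat : 0 < That) (hT : 0 < T)
    (μ₁ μ₃ : ℝ → ℝ)
    (hμ₁ : ContinuousOn μ₁ (tIval That)) (hμ₃ : ContinuousOn μ₃ (tIval That))
    (α b : ℝ → ℝ) (hα0 : α 0 = 1) (hb0 : b 0 = 0)
    (hαpos : ∀ τ ∈ tIval That, 0 < α τ)
    (hα' : ∀ τ ∈ tIval That, HasDerivWithinAt α (α τ * μ₁ τ) (tIval That) τ)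
    (hb' : ∀ τ ∈ tIval That,
      HasDerivWithinAt b (α τ ^ (p - 1) * μ₃ τ) (tIval That) τ)
    (ρ : ℝ → ℝ) (hρ0 : ρ 0 = 0) (hρmem : ∀ τ ∈ tIval That, ρ τ ∈ tIval T)
    (hρ' : ∀ τ ∈ tIval That,
      HasDerivWithinAt ρ (α τ ^ (2 * p - 2)) (tIval That) τ)
    (u ux uxx ut : ℝ → ℝ → ℝ)
    (hux : ∀ (x : ℝ), ∀ t ∈ tIval T, HasDerivAt (fun x' => u x' t) (ux x t) x)
    (huxx : ∀ (x : ℝ), ∀ t ∈ tIval T, HasDerivAt (fun x' => ux x' t) (uxx x t) x)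
    (hut : ∀ (x : ℝ), ∀ t ∈ tIval T,
      HasDerivWithinAt (fun t' => u x t') (ut x t) (tIval T) t)
    (hucont : ContinuousOn (fun q : ℝ × ℝ => u q.1 q.2) (Set.univ ×ˢ tIval T))
    (huxcont : ContinuousOn (fun q : ℝ × ℝ => ux q.1 q.2) (Set.univ ×ˢ tIval T))
    (huxxcont : ContinuousOn (fun q : ℝ × ℝ => uxx q.1 q.2) (Set.univ ×ˢ tIval T))
    (hutcont : ContinuousOn (fun q : ℝ × ℝ => ut q.1 q.2) (Set.univ ×ˢ tIval T))
    (hpde : ∀ (x t : ℝ), 0 < t → (t : EReal) < T →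
      ut x t = ν * uxx x t - |u x t| ^ (p - 1) * Real.sign (u x t) * ux x t) :
    ∀ (ξ τ : ℝ), 0 < τ → (τ : EReal) < That →
      deriv (fun s => comovV p α b ρ u ξ s) τ =
        ν * deriv (fun y => deriv (fun y' => comovV p α b ρ u y' τ) y) ξ
          - |comovV p α b ρ u ξ τ| ^ (p - 1) * Real.sign (comovV p α b ρ u ξ τ)
            * deriv (fun y => comovV p α b ρ u y τ) ξ
          + μ₁ τ * (comovV p α b ρ u ξ τ
            + (p - 1) * ξ * deriv (fun y => comovV p α b ρ u y τ) ξ)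
          + μ₃ τ * deriv (fun y => comovV p α b ρ u y τ) ξ := by
  intro ξ τ hτ1 hτ2
  have hτmem : τ ∈ tIval That := ⟨hτ1.le, hτ2⟩
  have hnhds : tIval That ∈ 𝓝 τ := tIval_mem_nhds hτ1 hτ2
  have hA : 0 < α τ := hαpos τ hτmem
  have hα'τ : HasDerivAt α (α τ * μ₁ τ) τ := (hα' τ hτmem).hasDerivAt hnhds
  have hb'τ : HasDerivAt b (α τ ^ (p - 1) * μ₃ τ) τ := (hb' τ hτmem).hasDerivAt hnhds
  have hρ'τ : HasDerivAt ρ (α τ ^ (2 * p - 2)) τ := (hρ' τ hτmem).hasDerivAt hnhds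
  -- ρ τ > 0
  have hconv : Convex ℝ (tIval That) := by
    rw [convex_iff_ordConnected]
    exact ⟨fun x hx y hy z hz =>
      ⟨hx.1.trans hz.1, lt_of_le_of_lt (EReal.coe_le_coe_iff.2 hz.2) hy.2⟩⟩
  have hρcont : ContinuousOn ρ (tIval That) := fun t ht => (hρ' t ht).continuousWithinAt
  have hmono : StrictMonoOn ρ (tIval That) := by
    apply strictMonoOn_of_deriv_pos hconv hρcont
    intro x hx
    have hx' : tIval That ∈ 𝓝 x := mem_interior_iff_mem_nhds.1 hx
    have hxmem : x ∈ tIval That := interior_subset hx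
    rw [((hρ' x hxmem).hasDerivAt hx').deriv]
    exact Real.rpow_pos_of_pos (hαpos x hxmem) _
  have h0mem : (0 : ℝ) ∈ tIval That := ⟨le_refl 0, by exact_mod_cast hThat⟩
  have hρpos : 0 < ρ τ := by
    have := hmono h0mem hτmem hτ1
    rwa [hρ0] at this
  have ht0mem : ρ τ ∈ tIval T := hρmem τ hτmem
  have ht0nhds : tIval T ∈ 𝓝 (ρ τ) := tIval_mem_nhds hρpos ht0mem.2
  set x0 : ℝ := α τ ^ (p - 1) * ξ + b τ with hx0
  have hut0 : HasDerivAt (fun t' => u x0 t') (ut x0 (ρ τ)) (ρ τ) :=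
    (hut x0 (ρ τ) ht0mem).hasDerivAt ht0nhds
  -- Fréchet differentiability of u at (x0, ρ τ)
  have hFD : HasFDerivAt (fun q : ℝ × ℝ => u q.1 q.2)
      ((ux x0 (ρ τ)) • (ContinuousLinearMap.fst ℝ ℝ ℝ)
        + (ut x0 (ρ τ)) • (ContinuousLinearMap.snd ℝ ℝ ℝ)) (x0, ρ τ) :=
    hasFDerivAt_of_partial isOpen_interior
      (fun x t ht => hux x t (interior_subset ht))
      (huxcont.mono (Set.prod_mono subset_rfl interior_subset))
      (mem_interior_iff_mem_nhds.2 ht0nhds) hut0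
  -- derivative of s ↦ α s ^ (p-1)
  have hB' : α τ ^ (p - 1) = α τ ^ (p - 1 - 1) * α τ := by
    have h := Real.rpow_add hA (p - 1 - 1) 1
    rw [Real.rpow_one] at h
    rw [show p - 1 - 1 + 1 = p - 1 by ring] at h
    exact h
  have hBB : α τ ^ (2 * p - 2) = α τ ^ (p - 1) * α τ ^ (p - 1) := by
    have h := Real.rpow_add hA (p - 1) (p - 1)
    rw [show p - 1 + (p - 1) = 2 * p - 2 by ring] at h
    exact h
  have hXd : HasDerivAt (fun s => α s ^ (p - 1) * ξ + b s)
      ((p - 1) * μ₁ τ * α τ ^ (p - 1) * ξ + α τ ^ (p - 1) * μ₃ τ) τ := by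
    have h1 : HasDerivAt (fun s => α s ^ (p - 1))
        ((α τ * μ₁ τ) * (p - 1) * α τ ^ (p - 1 - 1)) τ :=
      hα'τ.rpow_const (Or.inl hA.ne')
    have h2 := (h1.mul_const ξ).add hb'τ
    refine h2.congr_deriv ?_
    rw [hB']
    ring
  -- derivative of s ↦ u (α s ^ (p-1) ξ + b s, ρ s)
  have hg : HasDerivAt (fun s => u (α s ^ (p - 1) * ξ + b s) (ρ s))
      (ux x0 (ρ τ) * ((p - 1) * μ₁ τ * α τ ^ (p - 1) * ξ + α τ ^ (p - 1) * μ₃ τ)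
        + ut x0 (ρ τ) * α τ ^ (2 * p - 2)) τ := by
    have hγ := hXd.prodMk hρ'τ
    have h := hFD.comp_hasDerivAt τ hγ
    simp at h
    exact h
  -- time derivative of v
  have hv : HasDerivAt (fun s => comovV p α b ρ u ξ s)
      ((α τ * μ₁ τ) * u x0 (ρ τ)
        + α τ * (ux x0 (ρ τ) * ((p - 1) * μ₁ τ * α τ ^ (p - 1) * ξ
            + α τ ^ (p - 1) * μ₃ τ)
          + ut x0 (ρ τ) * α τ ^ (2 * p - 2))) τ := by
    simp only [comovV]
    exact hα'τ.mul hg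
  -- spatial derivatives of v
  have hlin : ∀ y : ℝ, HasDerivAt (fun y' => α τ ^ (p - 1) * y' + b τ) (α τ ^ (p - 1)) y :=
    fun y => by simpa using ((hasDerivAt_id y).const_mul (α τ ^ (p - 1))).add_const (b τ)
  have hvx : ∀ y : ℝ, HasDerivAt (fun y' => comovV p α b ρ u y' τ)
      (α τ * (ux (α τ ^ (p - 1) * y + b τ) (ρ τ) * α τ ^ (p - 1))) y := by
    intro y
    simp only [comovV]
    exact ((hux (α τ ^ (p - 1) * y + b τ) (ρ τ) ht0mem).comp y (hlin y)).const_mul (α τ)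
  have hderiv1 : (fun y => deriv (fun y' => comovV p α b ρ u y' τ) y)
      = fun y => α τ * (ux (α τ ^ (p - 1) * y + b τ) (ρ τ) * α τ ^ (p - 1)) :=
    funext fun y => (hvx y).deriv
  have hsecond : HasDerivAt
      (fun y => α τ * (ux (α τ ^ (p - 1) * y + b τ) (ρ τ) * α τ ^ (p - 1)))
      (α τ * (uxx x0 (ρ τ) * α τ ^ (p - 1) * α τ ^ (p - 1))) ξ := by
    have h1 : HasDerivAt (fun y => ux (α τ ^ (p - 1) * y + b τ) (ρ τ))
        (uxx x0 (ρ τ) * α τ ^ (p - 1)) ξ :=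
      by have := (huxx (α τ ^ (p - 1) * ξ + b τ) (ρ τ) ht0mem).comp ξ (hlin ξ); exact this
    exact (h1.mul_const _).const_mul _
  -- rewrite all the derivatives in the goal
  rw [hv.deriv, hderiv1, hsecond.deriv, (hvx ξ).deriv]
  simp only [comovV, ← hx0]
  -- use the PDE
  rw [hpde x0 (ρ τ) hρpos ht0mem.2]
  -- sign and abs identities
  rw [real_sign_mul_pos hA]
  rw [abs_mul, abs_of_pos hA, Real.mul_rpow hA.le (abs_nonneg _)]
  rw [hBB]
  ring
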